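/- Along any diagonal i, the prefix edit distance is non-decreasing and 1-Lipschitz: for every integer x with max(0,i) ≤ x < min(n, m+i), d_i(x) ≤ d_i(x+1) ≤ d_i(x) + 1. Consequently, for each t the set S_t(i) is a downward-closed subset (an initial segment) of the diagonal domain, so it suffices to record only its maximum element f(t,i). -/

import Mathlib

namespace Levenshtein

structure Cost (α β δ : Type*) where
  delete : α → δ
  insert : β → δ
  substitute : α → β → δ

def defaultCost {α : Type*} [DecidableEq α] : Cost α α ℕ where
  delete _ := 1
  insert _ := 1
  substitute a b := if a = b then 0 else 1

end Levenshtein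

def levenshtein {α β δ : Type*} [AddZeroClass δ] [Min δ] (C : Levenshtein.Cost α β δ) :
    List α → List β → δ
  | [], [] => 0
  | x :: xs, [] => C.delete x + levenshtein C xs []
  | [], y :: ys => C.insert y + levenshtein C [] ys
  | x :: xs, y :: ys =>
      min (C.delete x + levenshtein C xs (y :: ys))
        (min (C.insert y + levenshtein C (x :: xs) ys) (C.substitute x y + levenshtein C xs ys))

/-- The unit-cost Levenshtein edit distance. -/
def editDist {α : Type*} [DecidableEq α] (A B : List α) : ℕ :=
  levenshtein Levenshtein.defaultCost A B

/-- The prefix edit distance along diagonal `i`: `d_i(x) = d(A.take x, B.take (x - i))`. -/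
def diagDist {α : Type*} [DecidableEq α] (A B : List α) (i x : ℤ) : ℕ :=
  editDist (A.take x.toNat) (B.take (x - i).toNat)

attribute [simp] levenshtein Levenshtein.defaultCost

section aux
variable {α : Type*} [DecidableEq α]

lemma editDist_nil_left (B : List α) : editDist [] B = B.length := by
  induction B with
  | nil => simp [editDist, levenshtein]
  | cons b B ih => simp only [editDist] at ih ⊢; simp at ih ⊢; omega

lemma editDist_nil_right (A : List α) : editDist A [] = A.length := by
  induction A with
  | nil => simp [editDist, levenshtein]
  | cons a A ih => simp only [editDist] at ih ⊢; simp at ih ⊢; omega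

lemma editDist_cons_cons (a b : α) (A B : List α) :
    editDist (a :: A) (b :: B) =
      min (1 + editDist A (b :: B))
        (min (1 + editDist (a :: A) B)
          ((if a = b then 0 else 1) + editDist A B)) := by
  simp [editDist]

lemma editDist_lenLB (A B : List α) :
    B.length ≤ editDist A B + A.length ∧ A.length ≤ editDist A B + B.length := by
  match A, B with
  | [], B => simp [editDist_nil_left]
  | a :: A, [] => simp [editDist_nil_right]
  | a :: A, b :: B =>
    have h1 := editDist_lenLB A (b :: B)
    have h2 := editDist_lenLB (a :: A) B
    have h3 := editDist_lenLB A B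
    rw [editDist_cons_cons]
    simp only [List.length_cons] at *
    by_cases h : a = b <;> simp [h] at * <;> omega
termination_by A.length + B.length

lemma editDist_le_append (A B : List α) (a b : α) :
    editDist A B ≤ editDist (A ++ [a]) (B ++ [b]) := by
  match A, B with
  | [], [] => simp [editDist_nil_left]
  | [], y :: B =>
    have h := (editDist_lenLB [a] ((y :: B) ++ [b])).1
    simp [editDist_nil_left] at h ⊢
    omega
  | x :: A, [] =>
    have h := (editDist_lenLB ((x :: A) ++ [a]) [b]).2
    simp [editDist_nil_right] at h ⊢
    omega
  | x :: A, y :: B =>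
    have h1 := editDist_le_append A (y :: B) a b
    have h2 := editDist_le_append (x :: A) B a b
    have h3 := editDist_le_append A B a b
    rw [editDist_cons_cons, show (x :: A) ++ [a] = x :: (A ++ [a]) from rfl,
      show (y :: B) ++ [b] = y :: (B ++ [b]) from rfl, editDist_cons_cons]
    simp only [show (x :: A) ++ [a] = x :: (A ++ [a]) from rfl,
      show (y :: B) ++ [b] = y :: (B ++ [b]) from rfl] at h1 h2
    by_cases h : x = y <;> simp [h] at * <;> omega
termination_by A.length + B.length

lemma editDist_append_le (A B : List α) (a b : α) :
    editDist (A ++ [a]) (B ++ [b]) ≤ editDist A B + 1 := by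
  match A, B with
  | [], [] =>
    rw [show ([] : List α) ++ [a] = [a] from rfl, show ([] : List α) ++ [b] = [b] from rfl,
      editDist_cons_cons, editDist_nil_left]
    by_cases h : a = b <;> simp [h, editDist_nil_left, editDist_nil_right]
  | [], y :: B =>
    have h := editDist_append_le [] B a b
    rw [show ([] : List α) ++ [a] = [a] from rfl, show (y :: B) ++ [b] = y :: (B ++ [b]) from rfl,
      editDist_cons_cons]
    simp [editDist_nil_left] at h ⊢
    omega
  | x :: A, [] =>
    have h := editDist_append_le A [] a b
    rw [show ([] : List α) ++ [b] = [b] from rfl, show (x :: A) ++ [a] = x :: (A ++ [a]) from rfl,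
      editDist_cons_cons]
    simp [editDist_nil_right] at h ⊢
    omega
  | x :: A, y :: B =>
    have h1 := editDist_append_le A (y :: B) a b
    have h2 := editDist_append_le (x :: A) B a b
    have h3 := editDist_append_le A B a b
    rw [editDist_cons_cons, show (x :: A) ++ [a] = x :: (A ++ [a]) from rfl,
      show (y :: B) ++ [b] = y :: (B ++ [b]) from rfl, editDist_cons_cons]
    simp only [show (x :: A) ++ [a] = x :: (A ++ [a]) from rfl,
      show (y :: B) ++ [b] = y :: (B ++ [b]) from rfl] at h1 h2
    by_cases h : x = y <;> simp [h] at * <;> omega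
termination_by A.length + B.length

end aux

/-- Along any diagonal `i`, the prefix edit distance is non-decreasing and 1-Lipschitz;
consequently, for each `t` the set `S_t(i)` is downward closed in the diagonal domain. -/
theorem diagDist_mono_lipschitz {α : Type*} [DecidableEq α] (A B : List α) (i : ℤ)
    (hi₁ : -(B.length : ℤ) ≤ i) (hi₂ : i ≤ (A.length : ℤ)) :
    (∀ x : ℤ, max 0 i ≤ x → x < min (A.length : ℤ) ((B.length : ℤ) + i) →
      diagDist A B i x ≤ diagDist A B i (x + 1) ∧
      diagDist A B i (x + 1) ≤ diagDist A B i x + 1) ∧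
    (∀ (t : ℕ) (x y : ℤ), max 0 i ≤ x → x ≤ y →
      y ≤ min (A.length : ℤ) ((B.length : ℤ) + i) →
      diagDist A B i y ≤ t → diagDist A B i x ≤ t) := by
  have step : ∀ x : ℤ, max 0 i ≤ x → x < min (A.length : ℤ) ((B.length : ℤ) + i) →
      diagDist A B i x ≤ diagDist A B i (x + 1) ∧
      diagDist A B i (x + 1) ≤ diagDist A B i x + 1 := by
    intro x hx₁ hx₂
    have hx0 : 0 ≤ x := le_trans (le_max_left _ _) hx₁
    have hxi : i ≤ x := le_trans (le_max_right _ _) hx₁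
    have hn : x.toNat < A.length := by omega
    have hk : (x - i).toNat < B.length := by omega
    have e1 : (x + 1).toNat = x.toNat + 1 := by omega
    have e2 : (x + 1 - i).toNat = (x - i).toNat + 1 := by omega
    have tA : A.take (x.toNat + 1) = A.take x.toNat ++ [A[x.toNat]] := by
      rw [← List.take_concat_get hn, List.concat_eq_append]
    have tB : B.take ((x - i).toNat + 1) = B.take (x - i).toNat ++ [B[(x - i).toNat]] := by
      rw [← List.take_concat_get hk, List.concat_eq_append]
    unfold diagDist
    rw [e1, e2, tA, tB]
    exact ⟨editDist_le_append _ _ _ _, editDist_append_le _ _ _ _⟩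
  refine ⟨step, ?_⟩
  intro t x y hx₁ hxy hy₂ hyt
  have key : ∀ d : ℕ, ∀ z : ℤ, max 0 i ≤ z → z + d ≤ min (A.length : ℤ) ((B.length : ℤ) + i) →
      diagDist A B i z ≤ diagDist A B i (z + d) := by
    intro d
    induction d with
    | zero => intro z _ _; simp
    | succ d ih =>
      intro z hz₁ hz₂
      have h1 : z + d ≤ min (A.length : ℤ) ((B.length : ℤ) + i) := by push_cast at hz₂ ⊢; omega
      have h2 := ih z hz₁ h1
      by_cases hlt : z + d < min (A.length : ℤ) ((B.length : ℤ) + i)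
      · have hz₃ : max 0 i ≤ z + d := by
          have : (0 : ℤ) ≤ d := Int.ofNat_nonneg d
          omega
        have h3 := (step (z + d) hz₃ hlt).1
        calc diagDist A B i z ≤ diagDist A B i (z + d) := h2
          _ ≤ diagDist A B i (z + d + 1) := h3
          _ = diagDist A B i (z + (d + 1 : ℕ)) := by push_cast; ring_nf
      · exfalso; push_cast at hz₂; omega
  have hd : y = x + ((y - x).toNat : ℤ) := by omega
  calc diagDist A B i x ≤ diagDist A B i (x + ((y - x).toNat : ℤ)) := by
        apply key _ _ hx₁; rw [← hd]; exact hy₂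
    _ = diagDist A B i y := by rw [← hd]
    _ ≤ t := hyt
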